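/- Fix N ≥ 3, 1 ≤ K ≤ N−2, and a probability distribution ζ on ℝ^d. Let S ⊂ ℝ^d be a bounded set with P(ζ ∈ S) > 0 and let ε₁ > 0; set ε₂ = ε₁/(4(N−K)²). Then there exists a constant σ > 0, depending only on ε₁, S, K and N, such that for any N−K points x_1,…,x_{N−K} ∈ (supp ζ) ∩ S with G_{N−K}(x_1,…,x_{N−K}) > ε₁, if ζ_1,…,ζ_K are i.i.d. with distribution ζ, then the probability that the minimum of G_{N−K} over all (N−K)-element submultisets of {ζ_1,…,ζ_K, x_1,…,x_{N−K}} is strictly less than G_{N−K}(x_1,…,x_{N−K}) − ε₂ is at least σ. -/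

import Mathlib

open MeasureTheory Filter Metric

noncomputable section

def energy {E : Type*} [NormedAddCommGroup E] [NormedSpace ℝ E] (s : Multiset E) : ℝ :=
  (s.map fun x => ‖x - (s.card : ℝ)⁻¹ • s.sum‖ ^ 2).sum

def msupport {E : Type*} [PseudoMetricSpace E] [MeasurableSpace E] (ζ : Measure E) :
    Set E :=
  {x | ∀ ε > 0, 0 < ζ (Metric.ball x ε)}

section aux

variable {E : Type*} [NormedAddCommGroup E] [InnerProductSpace ℝ E]

lemma energy_ofFn {n : ℕ} (y : Fin n → E) :
    energy (↑(List.ofFn y) : Multiset E) = ∑ k, ‖y k - (n : ℝ)⁻¹ • ∑ l, y l‖ ^ 2 := by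
  unfold energy
  simp [Multiset.map_coe, Multiset.sum_coe, List.map_ofFn, List.sum_ofFn, Function.comp]

lemma energy_pair {n : ℕ} (hn : n ≠ 0) (y : Fin n → E) :
    energy (↑(List.ofFn y) : Multiset E)
      = (2 * n : ℝ)⁻¹ * ∑ k, ∑ l, ‖y k - y l‖ ^ 2 := by
  have hn0 : (0:ℝ) < n := by exact_mod_cast Nat.pos_of_ne_zero hn
  rw [energy_ofFn]
  set T : E := ∑ l, y l with hT
  set Q : ℝ := ∑ k, ‖y k‖ ^ 2 with hQ
  have expand : ∀ a b : E, ‖a - b‖ ^ 2 = ‖a‖ ^ 2 - 2 * (inner ℝ a b : ℝ) + ‖b‖ ^ 2 := fun a b =>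
    norm_sub_sq_real a b
  have hL : ∑ k, ‖y k - (n : ℝ)⁻¹ • T‖ ^ 2 = Q - (n:ℝ)⁻¹ * ‖T‖^2 := by
    simp only [expand]
    rw [Finset.sum_add_distrib, Finset.sum_sub_distrib, ← Finset.mul_sum, ← sum_inner,
      real_inner_smul_right, real_inner_self_eq_norm_sq, Finset.sum_const, Finset.card_univ,
      Fintype.card_fin, nsmul_eq_mul, norm_smul]
    have : |((n:ℝ))⁻¹| = (n:ℝ)⁻¹ := abs_of_nonneg (by positivity)
    rw [Real.norm_eq_abs, this]
    field_simp
    ring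
  have hR : ∑ k, ∑ l, ‖y k - y l‖ ^ 2 = 2 * (n * Q - ‖T‖^2) := by
    simp only [expand]
    have : ∀ k, ∑ l, (‖y k‖ ^ 2 - 2 * (inner ℝ (y k) (y l) : ℝ) + ‖y l‖ ^ 2)
        = n * ‖y k‖^2 - 2 * (inner ℝ (y k) T : ℝ) + Q := by
      intro k
      rw [Finset.sum_add_distrib, Finset.sum_sub_distrib, ← Finset.mul_sum, ← inner_sum,
        Finset.sum_const, Finset.card_univ, Fintype.card_fin, nsmul_eq_mul, hQ, hT]
    simp only [this]
    rw [Finset.sum_add_distrib, Finset.sum_sub_distrib, ← Finset.mul_sum, ← Finset.mul_sum,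
      ← sum_inner, real_inner_self_eq_norm_sq, Finset.sum_const, Finset.card_univ,
      Fintype.card_fin, nsmul_eq_mul, hQ]
    ring
  rw [hL, hR]
  field_simp

end aux

lemma ofFn_update_le {E : Type*} {n : ℕ} (x : Fin n → E) (j : Fin n) (z : E)
    {Z : Multiset E} (hz : z ∈ Z) :
    (↑(List.ofFn (Function.update x j z)) : Multiset E) ≤ ↑(List.ofFn x) + Z := by
  classical
  have hofn : ∀ f : Fin n → E, (↑(List.ofFn f) : Multiset E)
      = Multiset.map f (↑(List.finRange n) : Multiset (Fin n)) := by
    intro f; rw [List.ofFn_eq_map]; rfl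
  set m : Multiset (Fin n) := (↑(List.finRange n) : Multiset (Fin n)) with hm
  have hjm : j ∈ m := by simp [hm, List.mem_finRange]
  have hnd : m.Nodup := by simp [hm, List.nodup_finRange]
  have hcons : m = j ::ₘ m.erase j := (Multiset.cons_erase hjm).symm
  set M : Multiset E := Multiset.map x (m.erase j) with hM
  have h1 : (↑(List.ofFn (Function.update x j z)) : Multiset E) = z ::ₘ M := by
    rw [hofn, hcons, Multiset.map_cons, Function.update_self]
    congr 1
    refine Multiset.map_congr rfl fun a ha => ?_
    exact Function.update_of_ne ((Multiset.Nodup.mem_erase_iff hnd).mp ha).1 z x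
  have h2 : (↑(List.ofFn x) : Multiset E) = x j ::ₘ M := by
    rw [hofn, hcons, Multiset.map_cons]
  rw [h1, h2]
  calc z ::ₘ M = {z} + M := (Multiset.singleton_add z M).symm
    _ ≤ Z + M := add_le_add (Multiset.singleton_le.mpr hz) le_rfl
    _ ≤ (x j ::ₘ M) + Z := by
        rw [add_comm]
        exact add_le_add (Multiset.le_cons_self M (x j)) le_rfl

lemma sum_pair_split {n : ℕ} (j : Fin n) (f : Fin n → Fin n → ℝ) :
    ∑ k, ∑ l, f k l = f j j + (∑ l ∈ Finset.univ.erase j, f j l)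
      + (∑ k ∈ Finset.univ.erase j, f k j)
      + ∑ k ∈ Finset.univ.erase j, ∑ l ∈ Finset.univ.erase j, f k l := by
  have h1 : ∀ k, ∑ l, f k l = f k j + ∑ l ∈ Finset.univ.erase j, f k l := fun k =>
    (Finset.add_sum_erase _ _ (Finset.mem_univ j)).symm
  rw [← Finset.add_sum_erase _ (fun k => ∑ l, f k l) (Finset.mem_univ j)]
  simp only [h1]
  rw [Finset.sum_add_distrib]
  ring

lemma pi_cyl {α : Type*} [MeasurableSpace α] {K : ℕ} (ζ : Measure α) [IsProbabilityMeasure ζ]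
    (i0 : Fin K) {B : Set α} (hB : MeasurableSet B) :
    (Measure.pi fun _ : Fin K => ζ) {zs : Fin K → α | zs i0 ∈ B} = ζ B := by
  have hset : {zs : Fin K → α | zs i0 ∈ B}
      = Set.pi Set.univ (fun l => if l = i0 then B else Set.univ) := by
    ext zs
    simp only [Set.mem_setOf_eq, Set.mem_pi, Set.mem_univ, forall_true_left]
    constructor
    · intro h l
      by_cases hl : l = i0 <;> simp [hl, h]
    · intro h
      simpa using h i0
  rw [hset, Measure.pi_pi]
  simp [apply_ite ζ, measure_univ]

set_option maxHeartbeats 1000000 in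
theorem stmt5 {d N K : ℕ} (hN : 3 ≤ N) (hK1 : 1 ≤ K) (hK2 : K ≤ N - 2)
    (ζ : Measure (EuclideanSpace ℝ (Fin d))) [IsProbabilityMeasure ζ]
    (S : Set (EuclideanSpace ℝ (Fin d))) (hSbdd : Bornology.IsBounded S)
    (hSmeas : MeasurableSet S) (hSpos : 0 < ζ S) (ε₁ : ℝ) (hε₁ : 0 < ε₁) :
    ∃ σ > (0 : ℝ), ∀ x : Fin (N - K) → EuclideanSpace ℝ (Fin d),
      (∀ i, x i ∈ msupport ζ ∩ S) →
      ε₁ < energy (↑(List.ofFn x) : Multiset (EuclideanSpace ℝ (Fin d))) →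
      ENNReal.ofReal σ ≤
        (Measure.pi fun _ : Fin K => ζ)
          {z : Fin K → EuclideanSpace ℝ (Fin d) |
            ∃ s : Multiset (EuclideanSpace ℝ (Fin d)),
              s ≤ ↑(List.ofFn x) + ↑(List.ofFn z) ∧ s.card = N - K ∧
              energy s < energy (↑(List.ofFn x) : Multiset (EuclideanSpace ℝ (Fin d))) -
                ε₁ / (4 * ((N : ℝ) - K) ^ 2)} := by
  classical
  obtain ⟨R₀, hR₀⟩ := hSbdd.subset_closedBall 0
  set R : ℝ := max R₀ 0 with hRdef
  have hRnn : (0:ℝ) ≤ R := le_max_right _ _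
  have hSR : ∀ w ∈ S, ‖w‖ ≤ R := fun w hw => by
    have h := hR₀ hw
    rw [mem_closedBall_zero_iff] at h
    exact h.trans (le_max_left _ _)
  set n := N - K with hn
  have hn2 : 2 ≤ n := by omega
  have hnne : n ≠ 0 := by omega
  have hnpos : (0:ℝ) < n := by exact_mod_cast Nat.pos_of_ne_zero hnne
  have hcast : (N:ℝ) - K = (n : ℝ) := by
    rw [hn]
    rw [Nat.cast_sub (by omega : K ≤ N)]
  rw [show ((N:ℝ) - K) = (n:ℝ) from hcast]
  set e : ℝ := ε₁ / (4 * (n:ℝ)^2) with he_def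
  have he_pos : 0 < e := by positivity
  set C : ℝ := 4 * R + 2 with hCdef
  have hCpos : 0 < C := by positivity
  set δ : ℝ := min 1 (e / C) with hδdef
  have hδpos : 0 < δ := lt_min one_pos (div_pos he_pos hCpos)
  have hδ1 : δ ≤ 1 := min_le_left _ _
  have hCδ : C * δ ≤ e := by
    have h := min_le_right (1:ℝ) (e / C)
    calc C * δ ≤ C * (e/C) := by
          exact mul_le_mul_of_nonneg_left h hCpos.le
      _ = e := by field_simp
  have htb : TotallyBounded S :=
    hSbdd.isCompact_closure.totallyBounded.subset subset_closure
  obtain ⟨t, htfin, htcov⟩ := (totallyBounded_iff.mp htb) (δ/4) (by positivity)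
  set F : Finset (EuclideanSpace ℝ (Fin d)) :=
    htfin.toFinset.filter (fun y => 0 < ζ (ball y (δ/2))) with hFdef
  set σ : ℝ := if h : F.Nonempty then F.inf' h (fun y => (ζ (ball y (δ/2))).toReal) else 1
    with hσdef
  have hσpos : 0 < σ := by
    rw [hσdef]
    split_ifs with h
    · rw [Finset.lt_inf'_iff]
      intro y hy
      have hy' := (Finset.mem_filter.mp hy).2
      exact ENNReal.toReal_pos hy'.ne' (measure_ne_top ζ _)
    · exact one_pos
  refine ⟨σ, hσpos, ?_⟩
  intro x hx hG
  set G : ℝ := energy (↑(List.ofFn x) : Multiset (EuclideanSpace ℝ (Fin d))) with hGdef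
  have hGpos : 0 < G := hε₁.trans hG
  set D : Fin n → ℝ := fun k => ∑ l, ‖x k - x l‖^2 with hDdef
  have hPx : G = (2*(n:ℝ))⁻¹ * ∑ k, ∑ l, ‖x k - x l‖^2 := energy_pair hnne x
  have hP2 : (∑ k, ∑ l, ‖x k - x l‖^2) = 2 * n * G := by
    rw [hPx]
    field_simp
  obtain ⟨p, -, hpmax⟩ := Finset.exists_max_image Finset.univ
    (fun p : Fin n × Fin n => ‖x p.1 - x p.2‖^2)
    ⟨(⟨0, by omega⟩, ⟨0, by omega⟩), Finset.mem_univ _⟩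
  have hPle : 2*(n:ℝ)*G ≤ (n:ℝ)^2 * ‖x p.1 - x p.2‖^2 := by
    rw [← hP2]
    calc (∑ k, ∑ l, ‖x k - x l‖^2)
        ≤ ∑ _k : Fin n, ∑ _l : Fin n, ‖x p.1 - x p.2‖^2 :=
          Finset.sum_le_sum fun k _ => Finset.sum_le_sum fun l _ =>
            hpmax (k, l) (Finset.mem_univ _)
      _ = (n:ℝ)^2 * ‖x p.1 - x p.2‖^2 := by
          simp [Finset.sum_const, Finset.card_univ]
          ring
  obtain ⟨i, j, hDij, hij⟩ : ∃ i j : Fin n, D i ≤ D j ∧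
      2*(n:ℝ)*G ≤ (n:ℝ)^2 * ‖x i - x j‖^2 := by
    rcases le_total (D p.1) (D p.2) with h | h
    · exact ⟨p.1, p.2, h, hPle⟩
    · exact ⟨p.2, p.1, h, by rw [norm_sub_rev]; exact hPle⟩
  obtain ⟨hxsupp, hxS⟩ := hx i
  have hmem : x i ∈ ⋃ y ∈ t, ball y (δ/4) := htcov hxS
  obtain ⟨y, hyt, hxy⟩ := Set.mem_iUnion₂.mp hmem
  rw [mem_ball] at hxy
  have hyF : y ∈ F := by
    rw [hFdef, Finset.mem_filter]
    refine ⟨htfin.mem_toFinset.mpr hyt, ?_⟩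
    have hsub : ball (x i) (δ/4) ⊆ ball y (δ/2) := by
      intro w hw
      rw [mem_ball] at hw ⊢
      have ht3 := dist_triangle w (x i) y
      linarith
    calc (0:ENNReal) < ζ (ball (x i) (δ/4)) := hxsupp (δ/4) (by positivity)
      _ ≤ ζ (ball y (δ/2)) := measure_mono hsub
  have hFne : F.Nonempty := ⟨y, hyF⟩
  set B := ball y (δ/2) with hBdef
  have hσle : ENNReal.ofReal σ ≤ ζ B := by
    have h1 : σ ≤ (ζ B).toReal := by
      rw [hσdef, dif_pos hFne]
      exact Finset.inf'_le _ hyF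
    calc ENNReal.ofReal σ ≤ ENNReal.ofReal (ζ B).toReal := ENNReal.ofReal_le_ofReal h1
      _ = ζ B := ENNReal.ofReal_toReal (measure_ne_top ζ _)
  have hBsub : B ⊆ ball (x i) δ := by
    intro w hw
    rw [hBdef, mem_ball] at hw
    rw [mem_ball]
    have ht3 := dist_triangle w y (x i)
    rw [dist_comm y (x i)] at ht3
    linarith
  have hK0 : 0 < K := hK1
  set i0 : Fin K := ⟨0, hK0⟩ with hi0
  have hsubev : {zs : Fin K → EuclideanSpace ℝ (Fin d) | zs i0 ∈ B} ⊆
      {zs : Fin K → EuclideanSpace ℝ (Fin d) |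
        ∃ s : Multiset (EuclideanSpace ℝ (Fin d)),
          s ≤ ↑(List.ofFn x) + ↑(List.ofFn zs) ∧ s.card = n ∧
          energy s < G - e} := by
    intro zs hzs
    set z := zs i0 with hzdef
    have hzball : z ∈ ball (x i) δ := hBsub hzs
    rw [mem_ball] at hzball
    set u := Function.update x j z with hu
    refine ⟨↑(List.ofFn u), ?_, ?_, ?_⟩
    · refine ofFn_update_le x j z ?_
      rw [Multiset.mem_coe, List.mem_ofFn]
      exact ⟨i0, rfl⟩
    · simp
    · -- energy estimate
      have hnorm : ∀ l, ‖x l‖ ≤ R := fun l => hSR _ (hx l).2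
      have hzxi : ‖z - x i‖ ≤ δ := by
        rw [← dist_eq_norm]
        exact hzball.le
      have hpt : ∀ l, ‖z - x l‖^2 ≤ ‖x i - x l‖^2 + C * δ := by
        intro l
        have h1 : ‖z - x l‖ ≤ ‖z - x i‖ + ‖x i - x l‖ := by
          have hrw : z - x l = (z - x i) + (x i - x l) := by abel
          rw [hrw]; exact norm_add_le _ _
        have h2 : ‖x i - x l‖ ≤ 2*R := (norm_sub_le _ _).trans (by linarith [hnorm i, hnorm l])
        have h3 : (0:ℝ) ≤ ‖z - x i‖ := norm_nonneg _
        have h4 : (0:ℝ) ≤ ‖x i - x l‖ := norm_nonneg _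
        have h5 : (0:ℝ) ≤ ‖z - x l‖ := norm_nonneg _
        have h7 : ‖z - x i‖ * (‖z - x i‖ + 2*‖x i - x l‖) ≤ δ * (4*R + 1) :=
          mul_le_mul hzxi (by linarith) (by linarith) hδpos.le
        have h10 : δ*(4*R+1) ≤ C*δ := by
          rw [hCdef, mul_comm δ _]
          exact mul_le_mul_of_nonneg_right (by linarith) hδpos.le
        calc ‖z - x l‖^2 ≤ (‖z - x i‖ + ‖x i - x l‖)^2 := pow_le_pow_left₀ h5 h1 2
          _ = ‖x i - x l‖^2 + ‖z - x i‖*(‖z - x i‖ + 2*‖x i - x l‖) := by ring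
          _ ≤ ‖x i - x l‖^2 + C*δ := by linarith
      set Q : EuclideanSpace ℝ (Fin d) → ℝ :=
        fun w => ∑ l ∈ Finset.univ.erase j, ‖w - x l‖^2 with hQdef
      have hQz : Q z ≤ Q (x i) + (n:ℝ) * (C * δ) := by
        have hle : Q z ≤ ∑ l ∈ Finset.univ.erase j, (‖x i - x l‖^2 + C*δ) :=
          Finset.sum_le_sum fun l _ => hpt l
        rw [Finset.sum_add_distrib, Finset.sum_const] at hle
        have hcard : (Finset.univ.erase j).card = n - 1 := by
          rw [Finset.card_erase_of_mem (Finset.mem_univ j), Finset.card_univ, Fintype.card_fin]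
        rw [hcard, nsmul_eq_mul] at hle
        have hmono : ((n-1 : ℕ):ℝ) * (C*δ) ≤ (n:ℝ) * (C*δ) := by
          apply mul_le_mul_of_nonneg_right _ (by positivity)
          exact_mod_cast Nat.sub_le n 1
        linarith
      have hQi : Q (x i) = D i - ‖x i - x j‖^2 := by
        have h : ‖x i - x j‖^2 + ∑ l ∈ Finset.univ.erase j, ‖x i - x l‖^2
            = ∑ l, ‖x i - x l‖^2 := by
          simpa using Finset.add_sum_erase Finset.univ (fun l => ‖x i - x l‖^2)
            (Finset.mem_univ j)
        show (∑ l ∈ Finset.univ.erase j, ‖x i - x l‖^2)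
            = (∑ l, ‖x i - x l‖^2) - ‖x i - x j‖^2
        linarith
      have hQj : Q (x j) = D j := by
        have h : ‖x j - x j‖^2 + ∑ l ∈ Finset.univ.erase j, ‖x j - x l‖^2
            = ∑ l, ‖x j - x l‖^2 := by
          simpa using Finset.add_sum_erase Finset.univ (fun l => ‖x j - x l‖^2)
            (Finset.mem_univ j)
        have h0 : ‖x j - x j‖^2 = 0 := by simp
        show (∑ l ∈ Finset.univ.erase j, ‖x j - x l‖^2) = ∑ l, ‖x j - x l‖^2
        linarith
      have hupd : ∀ k : Fin n, k ≠ j → u k = x k := fun k hk => Function.update_of_ne hk z x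
      have hsplitu := sum_pair_split j (fun k l => ‖u k - u l‖^2)
      have hsplitx := sum_pair_split j (fun k l => ‖x k - x l‖^2)
      have hA : ∑ k ∈ Finset.univ.erase j, ∑ l ∈ Finset.univ.erase j, ‖u k - u l‖^2
          = ∑ k ∈ Finset.univ.erase j, ∑ l ∈ Finset.univ.erase j, ‖x k - x l‖^2 :=
        Finset.sum_congr rfl fun k hk => Finset.sum_congr rfl fun l hl => by
          rw [hupd k (Finset.mem_erase.mp hk).1, hupd l (Finset.mem_erase.mp hl).1]
      have huj : u j = z := Function.update_self j z x
      have hBu : ∑ l ∈ Finset.univ.erase j, ‖u j - u l‖^2 = Q z := by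
        show _ = ∑ l ∈ Finset.univ.erase j, ‖z - x l‖^2
        refine Finset.sum_congr rfl fun l hl => ?_
        rw [hupd l (Finset.mem_erase.mp hl).1, huj]
      have hCu : ∑ k ∈ Finset.univ.erase j, ‖u k - u j‖^2 = Q z := by
        show _ = ∑ l ∈ Finset.univ.erase j, ‖z - x l‖^2
        refine Finset.sum_congr rfl fun k hk => ?_
        rw [hupd k (Finset.mem_erase.mp hk).1, huj, norm_sub_rev]
      have hBx : ∑ l ∈ Finset.univ.erase j, ‖x j - x l‖^2 = Q (x j) := rfl
      have hCx : ∑ k ∈ Finset.univ.erase j, ‖x k - x j‖^2 = Q (x j) :=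
        Finset.sum_congr rfl fun k _ => by rw [norm_sub_rev]
      have huu : ‖u j - u j‖^2 = 0 := by simp
      have hxx : ‖x j - x j‖^2 = 0 := by simp
      have hPu : (∑ k, ∑ l, ‖u k - u l‖^2)
          = (∑ k ∈ Finset.univ.erase j, ∑ l ∈ Finset.univ.erase j, ‖x k - x l‖^2)
            + 2 * Q z := by
        rw [hsplitu, hA, hBu, hCu, huu]; ring
      have hPxs : (∑ k, ∑ l, ‖x k - x l‖^2)
          = (∑ k ∈ Finset.univ.erase j, ∑ l ∈ Finset.univ.erase j, ‖x k - x l‖^2)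
            + 2 * Q (x j) := by
        rw [hsplitx, hBx, hCx, hxx]; ring
      -- arithmetic
      have he4 : 4*(n:ℝ)^2 * e = ε₁ := by
        rw [he_def]; field_simp
      have h8 : 8*(n:ℝ)^3*e < 2*(n:ℝ)*G := by
        have h := mul_lt_mul_of_pos_left hG (show (0:ℝ) < 2*(n:ℝ) by positivity)
        calc 8*(n:ℝ)^3*e = 2*(n:ℝ)*(4*(n:ℝ)^2*e) := by ring
          _ = 2*(n:ℝ)*ε₁ := by rw [he4]
          _ < 2*(n:ℝ)*G := h
      have h9 : 8*(n:ℝ)*e < ‖x i - x j‖^2 := by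
        have hlt : (n:ℝ)^2 * (8*(n:ℝ)*e) < (n:ℝ)^2 * ‖x i - x j‖^2 := by
          calc (n:ℝ)^2 * (8*(n:ℝ)*e) = 8*(n:ℝ)^3*e := by ring
            _ < 2*(n:ℝ)*G := h8
            _ ≤ _ := hij
        exact lt_of_mul_lt_mul_left hlt (by positivity)
      have hnCδ : (n:ℝ)*(C*δ) ≤ (n:ℝ)*e := mul_le_mul_of_nonneg_left hCδ hnpos.le
      have hne : 0 < (n:ℝ)*e := by positivity
      have hQfin : Q z < Q (x j) - (n:ℝ)*e := by
        rw [hQj]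
        linarith [hQz, hQi, hDij]
      have hPulx : (∑ k, ∑ l, ‖u k - u l‖^2)
          < (∑ k, ∑ l, ‖x k - x l‖^2) - 2*((n:ℝ)*e) := by
        rw [hPu, hPxs]; linarith
      have heu : energy (↑(List.ofFn u) : Multiset (EuclideanSpace ℝ (Fin d)))
          = (2*(n:ℝ))⁻¹ * ∑ k, ∑ l, ‖u k - u l‖^2 := energy_pair hnne u
      have h2n : (0:ℝ) < (2*(n:ℝ))⁻¹ := by positivity
      have hlt : energy (↑(List.ofFn u) : Multiset (EuclideanSpace ℝ (Fin d)))
          < (2*(n:ℝ))⁻¹ * ((∑ k, ∑ l, ‖x k - x l‖^2) - 2*((n:ℝ)*e)) := by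
        rw [heu]
        exact mul_lt_mul_of_pos_left hPulx h2n
      have hid : (2*(n:ℝ))⁻¹ * ((∑ k, ∑ l, ‖x k - x l‖^2) - 2*((n:ℝ)*e)) = G - e := by
        rw [hPx]
        field_simp
      rw [hid] at hlt
      exact hlt
  calc ENNReal.ofReal σ ≤ ζ B := hσle
    _ = (Measure.pi fun _ : Fin K => ζ) {zs : Fin K → EuclideanSpace ℝ (Fin d) | zs i0 ∈ B} :=
        (pi_cyl ζ i0 measurableSet_ball).symm
    _ ≤ _ := measure_mono hsubev
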